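/- If α(t) = μ'(t)/(4a(t)μ(t)) − d(t)/(2a(t)) (with a(t) ≠ 0, μ(t) ≠ 0), then α satisfies the Riccati-type equation α' + b + 2cα + 4aα² = c₀·a·β⁴ if and only if μ satisfies the linear second-order equation μ'' − τ(t)μ' + 4σ(t)μ = c₀·(2a)²β⁴μ, where τ = a'/a − 2c + 4d and σ = ab − cd + d² + (d/2)(a'/a − d'/d). -/

import Mathlib

/-- With `α = μ'/(4aμ) − d/(2a)`, the Riccati equation
`α' + b + 2cα + 4aα² = c₀ a β⁴` holds iff `μ` satisfies the linear equation
`μ'' − τ μ' + 4σ μ = c₀ (2a)² β⁴ μ`, where `τ = a'/a − 2c + 4d` and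
`σ = ab − cd + d² + (d/2)(a'/a − d'/d)`. -/
theorem riccati_iff_linear
    (a b c d β μ : ℝ → ℝ) (c₀ : ℝ) (hc₀ : c₀ = 0 ∨ c₀ = 1)
    (ha : ∀ t, a t ≠ 0) (hd : ∀ t, d t ≠ 0) (hμ0 : ∀ t, μ t ≠ 0)
    (haD : Differentiable ℝ a) (hbD : Differentiable ℝ b)
    (hcD : Differentiable ℝ c) (hdD : Differentiable ℝ d)
    (hβD : Differentiable ℝ β)
    (hμD : Differentiable ℝ μ) (hμD2 : Differentiable ℝ (deriv μ))
    (α : ℝ → ℝ)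
    (hα : ∀ t, α t = deriv μ t / (4 * a t * μ t) - d t / (2 * a t))
    (τ σ : ℝ → ℝ)
    (hτ : ∀ t, τ t = deriv a t / a t - 2 * c t + 4 * d t)
    (hσ : ∀ t, σ t = a t * b t - c t * d t + (d t) ^ 2
        + d t / 2 * (deriv a t / a t - deriv d t / d t)) :
    (∀ t, deriv α t + b t + 2 * c t * α t + 4 * a t * (α t) ^ 2
        = c₀ * a t * (β t) ^ 4)
      ↔
    (∀ t, deriv (deriv μ) t - τ t * deriv μ t + 4 * σ t * μ t
        = c₀ * (2 * a t) ^ 2 * (β t) ^ 4 * μ t) := by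
  have key : ∀ t, deriv α t =
      (deriv (deriv μ) t * (4 * a t * μ t)
        - deriv μ t * (4 * deriv a t * μ t + 4 * a t * deriv μ t))
          / (4 * a t * μ t) ^ 2
      - (deriv d t * (2 * a t) - d t * (2 * deriv a t)) / (2 * a t) ^ 2 := by
    intro t
    rw [funext hα]
    have h1 : HasDerivAt (fun t => 4 * a t * μ t)
        (4 * deriv a t * μ t + 4 * a t * deriv μ t) t := by
      have := (((haD t).hasDerivAt.const_mul 4).mul (hμD t).hasDerivAt)
      exact this
    have h2 : HasDerivAt (fun t => 2 * a t) (2 * deriv a t) t :=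
      (haD t).hasDerivAt.const_mul 2
    have hne1 : 4 * a t * μ t ≠ 0 := by
      have := ha t; have := hμ0 t; positivity
    have hne2 : 2 * a t ≠ 0 := by have := ha t; positivity
    exact (((hμD2 t).hasDerivAt.div h1 hne1).sub
      ((hdD t).hasDerivAt.div h2 hne2)).deriv
  have main : ∀ t,
      (deriv α t + b t + 2 * c t * α t + 4 * a t * (α t) ^ 2
        - c₀ * a t * (β t) ^ 4) * (4 * a t * μ t)
      = deriv (deriv μ) t - τ t * deriv μ t + 4 * σ t * μ t
        - c₀ * (2 * a t) ^ 2 * (β t) ^ 4 * μ t := by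
    intro t
    rw [key t, hα t, hτ t, hσ t]
    have ha' := ha t; have hd' := hd t; have hμ' := hμ0 t
    field_simp
    ring
  constructor
  · intro h t
    have hm := main t
    rw [h t] at hm
    simp at hm
    linarith [hm]
  · intro h t
    have hm := main t
    have hne1 : 4 * a t * μ t ≠ 0 := by
      have := ha t; have := hμ0 t; positivity
    have : (deriv α t + b t + 2 * c t * α t + 4 * a t * (α t) ^ 2
        - c₀ * a t * (β t) ^ 4) * (4 * a t * μ t) = 0 := by
      rw [hm]; linarith [h t]
    have := (mul_eq_zero.mp this).resolve_right hne1
    linarith
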